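/- arXiv:1807.02899 — 2 statements merged into one kernel-verified Lean document; each statement's English description precedes it below -/
import Mathlib

section
/- Let G be an (n, m) graph. If m = n, then the spread of the line graph of G equals the signless Laplacian spread of G, i.e., S_L(G) = q_1 - q_n = S_Q(G). -/
open Matrix Polynomial BigOperators

noncomputable section

namespace SpreadPaper

variable {V : Type*}

/-- The adjacency matrix of a simple graph over `ℝ` (classical decidability). -/
noncomputable def adjMat (G : SimpleGraph V) : Matrix V V ℝ :=
  letI := Classical.decRel G.Adj
  G.adjMatrix ℝ

lemma adjMat_isHermitian (G : SimpleGraph V) : (adjMat G).IsHermitian := by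
  letI := Classical.decRel G.Adj
  ext i j
  simp [adjMat, Matrix.conjTranspose_apply, SimpleGraph.adjMatrix_apply, G.adj_comm]

/-- The degree of a vertex (classical decidability). -/
noncomputable def deg [Fintype V] (G : SimpleGraph V) (v : V) : ℕ :=
  letI := Classical.decRel G.Adj
  G.degree v

/-- The signless Laplacian matrix `D + A` of a graph. -/
noncomputable def signQ [Fintype V] [DecidableEq V] (G : SimpleGraph V) : Matrix V V ℝ :=
  Matrix.diagonal (fun v => (deg G v : ℝ)) + adjMat G

lemma signQ_isHermitian [Fintype V] [DecidableEq V] (G : SimpleGraph V) :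
    (signQ G).IsHermitian :=
  (Matrix.isHermitian_diagonal _).add (adjMat_isHermitian G)

/-- The Laplacian matrix `D - A` of a graph. -/
noncomputable def lap [Fintype V] [DecidableEq V] (G : SimpleGraph V) : Matrix V V ℝ :=
  Matrix.diagonal (fun v => (deg G v : ℝ)) - adjMat G

lemma lap_isHermitian [Fintype V] [DecidableEq V] (G : SimpleGraph V) :
    (lap G).IsHermitian :=
  (Matrix.isHermitian_diagonal _).sub (adjMat_isHermitian G)

/-- The largest eigenvalue of a Hermitian real matrix. -/
noncomputable def maxEig {m : Type*} [Fintype m] [DecidableEq m] {A : Matrix m m ℝ}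
    (hA : A.IsHermitian) : ℝ :=
  ⨆ i, hA.eigenvalues i

/-- The smallest eigenvalue of a Hermitian real matrix. -/
noncomputable def minEig {m : Type*} [Fintype m] [DecidableEq m] {A : Matrix m m ℝ}
    (hA : A.IsHermitian) : ℝ :=
  ⨅ i, hA.eigenvalues i

/-- The spread (largest minus smallest eigenvalue) of a Hermitian real matrix. -/
noncomputable def sprd {m : Type*} [Fintype m] [DecidableEq m] {A : Matrix m m ℝ}
    (hA : A.IsHermitian) : ℝ :=
  maxEig hA - minEig hA

/-- `q` lists the eigenvalues of the Hermitian matrix `A` (with multiplicity) in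
nonincreasing order. -/
def IsDescSpectrum {m : Type*} [Fintype m] [DecidableEq m] {A : Matrix m m ℝ}
    (hA : A.IsHermitian) {k : ℕ} (q : Fin k → ℝ) : Prop :=
  Antitone q ∧ ∃ e : Fin k ≃ m, ∀ i, q i = hA.eigenvalues (e i)

noncomputable instance edgeSetFintype [Fintype V] (G : SimpleGraph V) : Fintype G.edgeSet :=
  Set.Finite.fintype (Set.toFinite _)

/-- The number of edges of a graph. -/
noncomputable def numEdges (G : SimpleGraph V) : ℕ := Nat.card G.edgeSet

/-- The total graph of `G`: vertices are the vertices and edges of `G`, with adjacency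
given by adjacency in `G`, adjacency in the line graph, or vertex-edge incidence. -/
def totalGraph (G : SimpleGraph V) : SimpleGraph (V ⊕ G.edgeSet) where
  Adj x y :=
    match x, y with
    | Sum.inl u, Sum.inl v => G.Adj u v
    | Sum.inl u, Sum.inr e => u ∈ (e : Sym2 V)
    | Sum.inr e, Sum.inl u => u ∈ (e : Sym2 V)
    | Sum.inr e, Sum.inr f => e ≠ f ∧ ∃ v, v ∈ (e : Sym2 V) ∧ v ∈ (f : Sym2 V)
  symm := by
    constructor
    rintro (u|e) (v|f) h
    · exact G.adj_symm h
    · exact h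
    · exact h
    · exact ⟨h.1.symm, h.2.choose, h.2.choose_spec.2, h.2.choose_spec.1⟩
  loopless := by
    constructor
    rintro (u|e) h
    · exact G.irrefl h
    · exact h.1 rfl

/-- The join `G ∨ H` of two graphs: all edges between the two vertex sets are added. -/
def joinG {α β : Type*} (G : SimpleGraph α) (H : SimpleGraph β) : SimpleGraph (α ⊕ β) where
  Adj x y :=
    match x, y with
    | Sum.inl a, Sum.inl b => G.Adj a b
    | Sum.inr a, Sum.inr b => H.Adj a b
    | Sum.inl _, Sum.inr _ => True
    | Sum.inr _, Sum.inl _ => True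
  symm := by
    constructor
    rintro (a|a) (b|b) h
    · exact G.adj_symm h
    · exact trivial
    · exact trivial
    · exact H.adj_symm h
  loopless := by
    constructor
    rintro (a|a) h
    · exact G.irrefl h
    · exact H.irrefl h

/-- The disjoint union of two graphs. -/
def dunion {α β : Type*} (G : SimpleGraph α) (H : SimpleGraph β) : SimpleGraph (α ⊕ β) where
  Adj x y :=
    match x, y with
    | Sum.inl a, Sum.inl b => G.Adj a b
    | Sum.inr a, Sum.inr b => H.Adj a b
    | Sum.inl _, Sum.inr _ => False
    | Sum.inr _, Sum.inl _ => False
  symm := by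
    constructor
    rintro (a|a) (b|b) h
    · exact G.adj_symm h
    · exact h.elim
    · exact h.elim
    · exact H.adj_symm h
  loopless := by
    constructor
    rintro (a|a) h
    · exact G.irrefl h
    · exact H.irrefl h

/-- `G` is `r`-regular. -/
def IsReg [Fintype V] (G : SimpleGraph V) (r : ℕ) : Prop := ∀ v, deg G v = r

/-- The minimum degree of a graph. -/
noncomputable def minDeg [Fintype V] (G : SimpleGraph V) : ℕ := sInf (Set.range (deg G))

/-- The maximum degree of a graph. -/
noncomputable def maxDeg [Fintype V] (G : SimpleGraph V) : ℕ := sSup (Set.range (deg G))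

/-- The first Zagreb index of a graph: the sum of the squares of the vertex degrees. -/
noncomputable def zagreb [Fintype V] (G : SimpleGraph V) : ℕ := ∑ v, (deg G v) ^ 2

/-- The vertex connectivity of `G` is at most `k`: some set of at most `k` vertices
disconnects `G`. -/
def HasConnLe (G : SimpleGraph V) (k : ℕ) : Prop :=
  ∃ U : Set V, Nat.card U ≤ k ∧ (Uᶜ).Nonempty ∧ ¬ (G.induce Uᶜ).Preconnected

/- ===== auxiliary lemmas ===== -/

lemma aux_charpoly_mul_comm {n : Type*} [Fintype n] [DecidableEq n] (A B : Matrix n n ℝ) :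
    (A * B).charpoly = (B * A).charpoly := by
  classical
  set A' : Matrix n n ℝ[X] := A.map C with hA'
  set B' : Matrix n n ℝ[X] := B.map C with hB'
  have h1 : (fromBlocks (1 : Matrix n n ℝ[X]) 0 (-B') ((X : ℝ[X]) • 1)) *
      (fromBlocks ((X : ℝ[X]) • (1 : Matrix n n ℝ[X])) A' B' 1)
      = fromBlocks ((X : ℝ[X]) • 1) A' 0 ((X : ℝ[X]) • 1 - B' * A') := by
    rw [fromBlocks_multiply]
    congr 1 <;> simp [Matrix.mul_smul, Matrix.smul_mul, sub_eq_neg_add]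
  have h2 : (fromBlocks ((X : ℝ[X]) • (1 : Matrix n n ℝ[X])) A' B' 1) *
      (fromBlocks (1 : Matrix n n ℝ[X]) 0 (-B') ((X : ℝ[X]) • 1))
      = fromBlocks ((X : ℝ[X]) • 1 - A' * B') ((X : ℝ[X]) • A') 0 ((X : ℝ[X]) • 1) := by
    rw [fromBlocks_multiply]
    congr 1 <;> simp [Matrix.mul_smul, Matrix.smul_mul, sub_eq_add_neg]
  have e1 := congrArg det h1
  have e2 := congrArg det h2
  rw [det_mul, det_fromBlocks_zero₂₁, det_fromBlocks_zero₁₂, det_one, one_mul] at e1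
  rw [det_mul, det_fromBlocks_zero₂₁, det_fromBlocks_zero₁₂, det_one, one_mul] at e2
  have hx : det ((X : ℝ[X]) • (1 : Matrix n n ℝ[X])) ≠ 0 := by
    rw [det_smul, det_one, mul_one]
    exact pow_ne_zero _ X_ne_zero
  have hcancel : det ((X : ℝ[X]) • (1 : Matrix n n ℝ[X]) - B' * A')
      = det ((X : ℝ[X]) • 1 - A' * B') := by
    apply mul_left_cancel₀ hx
    rw [← e1, mul_comm ((X : ℝ[X]) • (1 : Matrix n n ℝ[X]) - A' * B').det] at *
    rw [← e2] at *
    ring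
  have hch : ∀ M N : Matrix n n ℝ, (M * N).charpoly
      = det ((X : ℝ[X]) • (1 : Matrix n n ℝ[X]) - M.map C * N.map C) := by
    intro M N
    rw [Matrix.charpoly, charmatrix]
    congr 1
    rw [RingHom.mapMatrix_apply, Matrix.map_mul]
    congr 1
    simp [Matrix.scalar, Matrix.smul_one_eq_diagonal]
  rw [hch, hch, hcancel]

lemma aux_charpoly_diagonal {n : Type*} [Fintype n] [DecidableEq n] (d : n → ℝ) :
    (Matrix.diagonal d).charpoly = ∏ i, (X - C (d i)) := by
  rw [Matrix.charpoly, charmatrix]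
  rw [RingHom.mapMatrix_apply, Matrix.diagonal_map (map_zero C)]
  have h : Matrix.scalar n (X : ℝ[X]) - Matrix.diagonal (fun i => C (d i))
      = Matrix.diagonal (fun i => X - C (d i)) := by
    rw [Matrix.scalar, ← Matrix.diagonal_sub]
    rfl
  rw [h, Matrix.det_diagonal]

lemma aux_charpoly_herm_shift {n : Type*} [Fintype n] [DecidableEq n] {A : Matrix n n ℝ}
    (hA : A.IsHermitian) (c : ℝ) :
    (A + c • 1).charpoly = ∏ i, (X - C (hA.eigenvalues i + c)) := by
  set V' : Matrix n n ℝ := (hA.eigenvectorUnitary : Matrix n n ℝ) with hVdef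
  have hV : star V' * V' = 1 := by
    have h := hA.eigenvectorUnitary.2
    rw [Matrix.mem_unitaryGroup_iff'] at h
    exact h
  have hV' : V' * star V' = 1 := by
    have h := hA.eigenvectorUnitary.2
    rw [Matrix.mem_unitaryGroup_iff] at h
    exact h
  have hspec : A = V' * Matrix.diagonal hA.eigenvalues * star V' := by
    have h := hA.spectral_theorem
    simpa using h
  have hsum : A + c • 1 = V' * Matrix.diagonal (fun i => hA.eigenvalues i + c) * star V' := by
    have h1 : (c • (1 : Matrix n n ℝ)) = V' * (c • 1) * star V' := by
      rw [Matrix.mul_smul, Matrix.smul_mul, mul_one, hV']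
    conv_lhs => rw [hspec, h1]
    rw [← Matrix.add_mul, ← Matrix.mul_add]
    congr 2
    rw [Matrix.smul_one_eq_diagonal, Matrix.diagonal_add]
  rw [hsum, aux_charpoly_mul_comm, ← Matrix.mul_assoc, hV, Matrix.one_mul,
    aux_charpoly_diagonal]

lemma aux_roots_prod {ι : Type*} [Fintype ι] (f : ι → ℝ) :
    (∏ i, (X - C (f i))).roots = Finset.univ.val.map f := by
  rw [Finset.prod_eq_multiset_prod,
    show Multiset.map (fun i => X - C (f i)) Finset.univ.val
      = Multiset.map (fun a => X - C a) (Multiset.map f Finset.univ.val) from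
      (Multiset.map_map (fun a : ℝ => (X : ℝ[X]) - C a) f Finset.univ.val).symm,
    Polynomial.roots_multiset_prod_X_sub_C]

/-- The restricted incidence matrix. -/
noncomputable def incB [Fintype V] [DecidableEq V] (G : SimpleGraph V) : Matrix V G.edgeSet ℝ :=
  letI := Classical.decRel G.Adj
  (G.incMatrix ℝ).submatrix id (Subtype.val)

lemma incB_mul_transpose [Fintype V] [DecidableEq V] (G : SimpleGraph V) :
    incB G * (incB G)ᵀ = signQ G := by
  letI := Classical.decRel G.Adj
  ext a b
  have hfull : (incB G * (incB G)ᵀ) a b = (G.incMatrix ℝ * (G.incMatrix ℝ)ᵀ) a b := by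
    rw [Matrix.mul_apply, Matrix.mul_apply]
    rw [show ∑ e : Sym2 V, G.incMatrix ℝ a e * (G.incMatrix ℝ)ᵀ e b
        = ∑ e ∈ Set.toFinset G.edgeSet, G.incMatrix ℝ a e * (G.incMatrix ℝ)ᵀ e b from
      (Finset.sum_subset (Finset.subset_univ _) ?_).symm]
    · rw [Finset.sum_subtype (Set.toFinset G.edgeSet) (fun x => Set.mem_toFinset)]
      rfl
    · intro e _ he
      rw [Set.mem_toFinset] at he
      rw [G.incMatrix_of_notMem_incidenceSet fun h => he h.1, zero_mul]
  rw [hfull, G.incMatrix_mul_transpose]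
  by_cases hab : a = b
  · subst hab
    simp [signQ, adjMat, deg, Matrix.diagonal_apply_eq]
  · simp only [hab, if_false, signQ, Matrix.add_apply, Matrix.diagonal_apply_ne _ hab, adjMat,
      SimpleGraph.adjMatrix_apply, zero_add, Matrix.of_apply]

lemma transpose_mul_incB [Fintype V] [DecidableEq V] (G : SimpleGraph V) :
    (incB G)ᵀ * incB G = adjMat G.lineGraph + (2 : ℝ) • 1 := by
  letI := Classical.decRel G.Adj
  ext e f
  have hLHS : ((incB G)ᵀ * incB G) e f = ((G.incMatrix ℝ)ᵀ * G.incMatrix ℝ) (e : Sym2 V) f := by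
    simp [Matrix.mul_apply, incB]
  letI : DecidableRel G.lineGraph.Adj := Classical.decRel _
  by_cases hef : e = f
  · subst hef
    rw [hLHS, G.incMatrix_transpose_mul_diag, if_pos e.2]
    simp [adjMat, Matrix.one_apply, SimpleGraph.irrefl]
  · have hvalne : (e : Sym2 V) ≠ (f : Sym2 V) := fun h => hef (Subtype.ext h)
    have hRHS : (adjMat G.lineGraph + (2 : ℝ) • 1) e f
        = if G.lineGraph.Adj e f then 1 else 0 := by
      simp only [adjMat, Matrix.add_apply, Matrix.smul_apply, Matrix.one_apply, if_neg hef,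
        smul_zero, add_zero, SimpleGraph.adjMatrix_apply]
    rw [hLHS, hRHS, Matrix.mul_apply]
    have hterm : ∀ v : V, (G.incMatrix ℝ)ᵀ (e : Sym2 V) v * G.incMatrix ℝ v (f : Sym2 V)
        = if v ∈ (e : Sym2 V) ∧ v ∈ (f : Sym2 V) then 1 else 0 := by
      intro v
      rw [Matrix.transpose_apply, G.incMatrix_apply', G.incMatrix_apply']
      have h1 : (e : Sym2 V) ∈ G.incidenceSet v ↔ v ∈ (e : Sym2 V) := by
        simp [SimpleGraph.incidenceSet, e.2]
      have h2 : (f : Sym2 V) ∈ G.incidenceSet v ↔ v ∈ (f : Sym2 V) := by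
        simp [SimpleGraph.incidenceSet, f.2]
      simp only [h1, h2]
      split_ifs with p q r <;> simp_all
    simp only [hterm]
    rw [Finset.sum_boole]
    by_cases hadj : G.lineGraph.Adj e f
    · rw [if_pos hadj]
      obtain ⟨-, w, hw1, hw2⟩ := SimpleGraph.lineGraph_adj_iff_exists.mp hadj
      have hfil : Finset.univ.filter (fun v => v ∈ (e : Sym2 V) ∧ v ∈ (f : Sym2 V)) = {w} := by
        ext v
        simp only [Finset.mem_filter, Finset.mem_univ, true_and, Finset.mem_singleton]
        constructor
        · rintro ⟨hv1, hv2⟩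
          by_contra hvw
          have he' : (e : Sym2 V) = s(v, w) := (Sym2.mem_and_mem_iff hvw).mp ⟨hv1, hw1⟩
          have hf' : (f : Sym2 V) = s(v, w) := (Sym2.mem_and_mem_iff hvw).mp ⟨hv2, hw2⟩
          exact hvalne (he'.trans hf'.symm)
        · rintro rfl; exact ⟨hw1, hw2⟩
      rw [hfil]
      simp
    · rw [if_neg hadj]
      have hno : ∀ v : V, ¬(v ∈ (e : Sym2 V) ∧ v ∈ (f : Sym2 V)) := by
        intro v hv
        exact hadj (SimpleGraph.lineGraph_adj_iff_exists.mpr ⟨hef, v, hv.1, hv.2⟩)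
      have hfil : Finset.univ.filter (fun v => v ∈ (e : Sym2 V) ∧ v ∈ (f : Sym2 V)) = ∅ := by
        ext v; simp [hno v]
      rw [hfil]
      simp


/-- if `m = n` then `S_L(G) = q₁ - q_n = S_Q(G)`. -/
theorem lineGraph_spread_eq_signless_spread {V : Type*} [Fintype V] [DecidableEq V]
    (G : SimpleGraph V) (hmn : numEdges G = Fintype.card V) :
    sprd (adjMat_isHermitian G.lineGraph) = sprd (signQ_isHermitian G) := by
  rcases isEmpty_or_nonempty V with hV | hV
  · haveI : IsEmpty G.edgeSet := by
      constructor
      intro e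
      exact (Sym2.ind (fun x _ _ => hV.elim x) : ∀ z : Sym2 V, z ∈ G.edgeSet → False) e.1 e.2
    have hempty : ∀ {ι : Type _} [IsEmpty ι] (f : ι → ℝ), (⨆ i, f i) = ⨅ i, f i := by
      intro ι _ f
      rw [iSup, iInf, Set.range_eq_empty, Real.sSup_empty, Real.sInf_empty]
    rw [sprd, sprd, maxEig, maxEig, minEig, minEig, hempty, hempty, sub_self, sub_self]
  · have hcard : Fintype.card G.edgeSet = Fintype.card V := by
      have h := hmn
      rw [numEdges, Nat.card_eq_fintype_card] at h
      exact h
    haveI : Nonempty G.edgeSet := by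
      rw [← Fintype.card_pos_iff, hcard]
      exact Fintype.card_pos
    obtain ⟨e⟩ : Nonempty (G.edgeSet ≃ V) := ⟨Fintype.equivOfCardEq hcard⟩
    set B := incB G with hB
    set hL := adjMat_isHermitian G.lineGraph with hLdef
    set hQ := signQ_isHermitian G with hQdef
    set Cm : Matrix V V ℝ := B.submatrix id ⇑e.symm with hCm
    have hCC : Cm * Cmᵀ = B * Bᵀ := by
      ext a b
      simp only [Matrix.mul_apply, Matrix.transpose_apply, Matrix.submatrix_apply, hCm, id]
      exact Equiv.sum_comp e.symm (fun x => B a x * B b x)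
    have hCtC : Cmᵀ * Cm = (Matrix.reindex e e) (Bᵀ * B) := by
      ext a b
      simp [Matrix.mul_apply, hCm]
    have hchar : (signQ G).charpoly = (adjMat G.lineGraph + (2 : ℝ) • 1).charpoly := by
      rw [← incB_mul_transpose G, ← transpose_mul_incB G, ← hB, ← hCC, aux_charpoly_mul_comm,
        hCtC, Matrix.charpoly_reindex]
    have hQchar : (signQ G).charpoly = ∏ j, (X - C (hQ.eigenvalues j)) := by
      have h := aux_charpoly_herm_shift hQ 0
      simpa using h
    have hLchar : (adjMat G.lineGraph + (2 : ℝ) • 1).charpoly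
        = ∏ i, (X - C (hL.eigenvalues i + 2)) := aux_charpoly_herm_shift hL 2
    have hm : (Finset.univ.val.map hQ.eigenvalues)
        = Finset.univ.val.map (fun i => hL.eigenvalues i + 2) := by
      have h := congrArg Polynomial.roots (hQchar.symm.trans (hchar.trans hLchar))
      rwa [aux_roots_prod, aux_roots_prod] at h
    have hrange : Set.range hQ.eigenvalues = Set.range (fun i => hL.eigenvalues i + 2) := by
      ext x
      simp only [Set.mem_range]
      constructor
      · rintro ⟨j, rfl⟩
        have hmem : hQ.eigenvalues j ∈ Finset.univ.val.map (fun i => hL.eigenvalues i + 2) := by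
          rw [← hm]
          exact Multiset.mem_map_of_mem _ (Finset.mem_val.mpr (Finset.mem_univ j))
        obtain ⟨i, -, hi⟩ := Multiset.mem_map.mp hmem
        exact ⟨i, hi⟩
      · rintro ⟨i, rfl⟩
        have hmem : hL.eigenvalues i + 2 ∈ Finset.univ.val.map hQ.eigenvalues := by
          rw [hm]
          exact Multiset.mem_map_of_mem _ (Finset.mem_val.mpr (Finset.mem_univ i))
        obtain ⟨j, -, hj⟩ := Multiset.mem_map.mp hmem
        exact ⟨j, hj⟩
    have hmax : maxEig hQ = maxEig hL + 2 := by
      calc maxEig hQ = sSup (Set.range hQ.eigenvalues) := rfl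
        _ = sSup (Set.range fun i => hL.eigenvalues i + 2) := by rw [hrange]
        _ = ⨆ i, (hL.eigenvalues i + 2) := rfl
        _ = (⨆ i, hL.eigenvalues i) + 2 :=
          (ciSup_add (Set.finite_range _).bddAbove 2).symm
    have hmin : minEig hQ = minEig hL + 2 := by
      calc minEig hQ = sInf (Set.range hQ.eigenvalues) := rfl
        _ = sInf (Set.range fun i => hL.eigenvalues i + 2) := by rw [hrange]
        _ = ⨅ i, (hL.eigenvalues i + 2) := rfl
        _ = (⨅ i, hL.eigenvalues i) + 2 :=
          (ciInf_add (Set.finite_range _).bddBelow 2).symm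
    rw [sprd, sprd, hmax, hmin]
    ring


end SpreadPaper
end
end

section
/- Let G be a connected graph and G + e be obtained by adding a new edge. Then the spread of the line graph strictly increases: S_L(G) < S_L(G + e). -/
open Matrix Polynomial BigOperators

noncomputable section

namespace SpreadPaper

variable {V : Type*}

section SpectralHelpers

variable {m : Type*} [Fintype m] [DecidableEq m] {A : Matrix m m ℝ} (hA : A.IsHermitian)

lemma quad_eq_aux (x : m → ℝ) :
    x ⬝ᵥ A *ᵥ x = ∑ i, hA.eigenvalues i *
      (((hA.eigenvectorUnitary : Matrix m m ℝ)ᵀ *ᵥ x) i)^2 ∧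
    x ⬝ᵥ x = ∑ i, (((hA.eigenvectorUnitary : Matrix m m ℝ)ᵀ *ᵥ x) i)^2 := by
  set U : Matrix m m ℝ := (hA.eigenvectorUnitary : Matrix m m ℝ) with hU
  have hstar : star U = Uᵀ := by
    rw [Matrix.star_eq_conjTranspose, Matrix.conjTranspose_eq_transpose_of_trivial]
  set y : m → ℝ := Uᵀ *ᵥ x with hy
  have hUy : U *ᵥ y = x := by
    rw [hy, Matrix.mulVec_mulVec, ← hstar, (Matrix.mem_unitaryGroup_iff).mp
      hA.eigenvectorUnitary.2, Matrix.one_mulVec]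
  constructor
  · conv_lhs => rw [hA.spectral_theorem, Unitary.conjStarAlgAut_apply, ← hU]
    rw [hstar]
    have : (U * Matrix.diagonal (RCLike.ofReal ∘ hA.eigenvalues) * Uᵀ) *ᵥ x
        = U *ᵥ (Matrix.diagonal (RCLike.ofReal ∘ hA.eigenvalues) *ᵥ y) := by
      rw [← Matrix.mulVec_mulVec, ← Matrix.mulVec_mulVec]
    rw [this, Matrix.dotProduct_mulVec, ← Matrix.mulVec_transpose, ← hy]
    simp only [dotProduct, Matrix.mulVec_diagonal]
    exact Finset.sum_congr rfl fun i _ => by simp; ring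
  · conv_lhs => rw [← hUy]
    rw [Matrix.dotProduct_mulVec, ← Matrix.mulVec_transpose, Matrix.mulVec_mulVec, ← hstar,
      (Matrix.mem_unitaryGroup_iff').mp hA.eigenvectorUnitary.2, Matrix.one_mulVec]
    simp only [dotProduct]
    exact Finset.sum_congr rfl fun i _ => by ring

lemma quad_le_max (x : m → ℝ) : x ⬝ᵥ A *ᵥ x ≤ maxEig hA * (x ⬝ᵥ x) := by
  obtain ⟨h1, h2⟩ := quad_eq_aux hA x
  rw [h1, h2, Finset.mul_sum]
  refine Finset.sum_le_sum fun i _ => ?_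
  have : hA.eigenvalues i ≤ maxEig hA :=
    le_ciSup (Set.Finite.bddAbove (Set.finite_range _)) i
  exact mul_le_mul_of_nonneg_right this (sq_nonneg _)

lemma min_le_quad (x : m → ℝ) : minEig hA * (x ⬝ᵥ x) ≤ x ⬝ᵥ A *ᵥ x := by
  obtain ⟨h1, h2⟩ := quad_eq_aux hA x
  rw [h1, h2, Finset.mul_sum]
  refine Finset.sum_le_sum fun i _ => ?_
  have : minEig hA ≤ hA.eigenvalues i :=
    ciInf_le (Set.Finite.bddBelow (Set.finite_range _)) i
  exact mul_le_mul_of_nonneg_right this (sq_nonneg _)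

lemma unit_eigvec (i : m) :
    A *ᵥ ⇑(hA.eigenvectorBasis i) = hA.eigenvalues i • ⇑(hA.eigenvectorBasis i)
    ∧ ⇑(hA.eigenvectorBasis i) ⬝ᵥ ⇑(hA.eigenvectorBasis i) = 1 := by
  refine ⟨hA.mulVec_eigenvectorBasis i, ?_⟩
  have h := hA.eigenvectorBasis.orthonormal.1 i
  have : (inner ℝ (hA.eigenvectorBasis i) (hA.eigenvectorBasis i) : ℝ) = 1 := by
    rw [real_inner_self_eq_norm_sq, h]; norm_num
  rw [← this, EuclideanSpace.inner_eq_star_dotProduct]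
  simp [EuclideanSpace.inner_eq_star_dotProduct, dotProduct, mul_comm]

lemma exists_unit_max [Nonempty m] :
    ∃ x : m → ℝ, x ⬝ᵥ x = 1 ∧ x ⬝ᵥ A *ᵥ x = maxEig hA := by
  obtain ⟨i, hi⟩ := Finite.exists_max hA.eigenvalues
  have hmax : maxEig hA = hA.eigenvalues i :=
    le_antisymm (ciSup_le hi) (le_ciSup (Set.Finite.bddAbove (Set.finite_range _)) i)
  obtain ⟨h1, h2⟩ := unit_eigvec hA i
  exact ⟨_, h2, by rw [h1, dotProduct_smul, smul_eq_mul, h2, hmax, mul_one]⟩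

lemma exists_unit_min [Nonempty m] :
    ∃ x : m → ℝ, x ⬝ᵥ x = 1 ∧ x ⬝ᵥ A *ᵥ x = minEig hA := by
  obtain ⟨i, hi⟩ := Finite.exists_min hA.eigenvalues
  have hmin : minEig hA = hA.eigenvalues i :=
    le_antisymm (ciInf_le (Set.Finite.bddBelow (Set.finite_range _)) i) (le_ciInf hi)
  obtain ⟨h1, h2⟩ := unit_eigvec hA i
  exact ⟨_, h2, by rw [h1, dotProduct_smul, smul_eq_mul, h2, hmin, mul_one]⟩

lemma eigvec_of_quad_eq_max (x : m → ℝ) (hx : x ⬝ᵥ x = 1)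
    (hq : x ⬝ᵥ A *ᵥ x = maxEig hA) : A *ᵥ x = maxEig hA • x := by
  set B : Matrix m m ℝ := maxEig hA • (1 : Matrix m m ℝ) - A with hB
  have hBherm : B.IsHermitian := by
    simp [Matrix.IsHermitian, hB, Matrix.conjTranspose_sub, Matrix.conjTranspose_smul,
      Matrix.conjTranspose_one, hA.eq]
    rw [← Matrix.conjTranspose_eq_transpose_of_trivial]; exact hA.eq
  have hBpsd : B.PosSemidef := by
    refine Matrix.PosSemidef.of_dotProduct_mulVec_nonneg hBherm fun y => ?_
    have hsy : star y = y := rfl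
    rw [hsy, hB, Matrix.sub_mulVec, dotProduct_sub, Matrix.smul_mulVec,
      Matrix.one_mulVec, dotProduct_smul, smul_eq_mul]
    linarith [quad_le_max hA y]
  have h0 : star x ⬝ᵥ B *ᵥ x = 0 := by
    have hsx : star x = x := rfl
    rw [hsx, hB, Matrix.sub_mulVec, dotProduct_sub, Matrix.smul_mulVec,
      Matrix.one_mulVec, dotProduct_smul, smul_eq_mul, hx, hq, mul_one, sub_self]
  have := (hBpsd.dotProduct_mulVec_zero_iff x).mp h0
  rw [hB, Matrix.sub_mulVec, Matrix.smul_mulVec, Matrix.one_mulVec, sub_eq_zero] at this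
  exact this.symm

lemma quad_sum (A : Matrix m m ℝ) (x : m → ℝ) :
    x ⬝ᵥ A *ᵥ x = ∑ p, ∑ q, A p q * x p * x q := by
  simp only [dotProduct, Matrix.mulVec, Finset.mul_sum]
  exact Finset.sum_congr rfl fun p _ => Finset.sum_congr rfl fun q _ => by ring

end SpectralHelpers

section AdjHelpers

variable {W : Type*} (H : SimpleGraph W)

lemma adjMat_of_adj {a b : W} (h : H.Adj a b) : adjMat H a b = 1 := by
  unfold adjMat; rw [SimpleGraph.adjMatrix_apply, if_pos h]

lemma adjMat_of_not_adj {a b : W} (h : ¬ H.Adj a b) : adjMat H a b = 0 := by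
  unfold adjMat; rw [SimpleGraph.adjMatrix_apply, if_neg h]

lemma adjMat_nonneg (a b : W) : 0 ≤ adjMat H a b := by
  unfold adjMat; rw [SimpleGraph.adjMatrix_apply]
  split <;> norm_num

lemma adjMat_symm (a b : W) : adjMat H a b = adjMat H b a := by
  by_cases h : H.Adj a b
  · rw [adjMat_of_adj H h, adjMat_of_adj H h.symm]
  · rw [adjMat_of_not_adj H h, adjMat_of_not_adj H fun hh => h hh.symm]

lemma adjMat_diag (a : W) : adjMat H a a = 0 :=
  adjMat_of_not_adj H (H.irrefl (v := a))

end AdjHelpers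

/-- adding an edge to a connected graph strictly increases the spread of
the line graph. -/
theorem lineGraph_spread_lt_addEdge {V : Type*} [Fintype V] [DecidableEq V]
    (G : SimpleGraph V) (hconn : G.Connected) (u v : V) (huv : u ≠ v) (hne : ¬ G.Adj u v) :
    sprd (adjMat_isHermitian G.lineGraph) <
      sprd (adjMat_isHermitian (G ⊔ SimpleGraph.fromEdgeSet {s(u, v)}).lineGraph) := by
  classical
  set G' : SimpleGraph V := G ⊔ SimpleGraph.fromEdgeSet {s(u, v)} with hG'def
  set A : Matrix G.edgeSet G.edgeSet ℝ := adjMat G.lineGraph with hAdef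
  set A' : Matrix G'.edgeSet G'.edgeSet ℝ := adjMat G'.lineGraph with hA'def
  have hL : A.IsHermitian := adjMat_isHermitian G.lineGraph
  have hL' : A'.IsHermitian := adjMat_isHermitian G'.lineGraph
  -- basic edge facts
  have hsuv : s(u, v) ∉ G.edgeSet := by rwa [SimpleGraph.mem_edgeSet]
  have hadj' : G'.Adj u v := by
    rw [hG'def, SimpleGraph.sup_adj]
    exact Or.inr ((SimpleGraph.fromEdgeSet_adj _).mpr ⟨Set.mem_singleton _, huv⟩)
  have hmem' : s(u, v) ∈ G'.edgeSet := (SimpleGraph.mem_edgeSet _).mpr hadj'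
  have hGle : G ≤ G' := le_sup_left
  have hsub : ∀ e : Sym2 V, e ∈ G.edgeSet → e ∈ G'.edgeSet :=
    fun e he => SimpleGraph.edgeSet_mono hGle he
  set ι : G.edgeSet → G'.edgeSet := fun f => ⟨(f : Sym2 V), hsub _ f.2⟩ with hιdef
  set estar : G'.edgeSet := ⟨s(u, v), hmem'⟩ with hestar
  have hιne : ∀ f : G.edgeSet, ι f ≠ estar := by
    intro f h
    have hfe : (f : Sym2 V) = s(u, v) := congrArg Subtype.val h
    exact hsuv (hfe ▸ f.2)
  have hcover : ∀ p : G'.edgeSet, (p : Sym2 V) ∉ G.edgeSet → p = estar := by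
    intro p hp
    apply Subtype.ext
    have h2 := p.2
    simp only [hG'def, SimpleGraph.edgeSet_sup, SimpleGraph.edgeSet_fromEdgeSet,
      Set.mem_union, Set.mem_diff, Set.mem_singleton_iff] at h2
    rcases h2 with h2 | h2
    · exact absurd h2 hp
    · exact h2.1
  -- the sum-splitting equivalence
  let E : G.edgeSet ⊕ Unit ≃ G'.edgeSet :=
    { toFun := Sum.elim ι fun _ => estar
      invFun := fun p => if h : (p : Sym2 V) ∈ G.edgeSet then Sum.inl ⟨p, h⟩ else Sum.inr ()
      left_inv := by
        rintro (f | ⟨⟩)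
        · simp only [Sum.elim_inl, hιdef]
          rw [dif_pos f.2]
        · simp only [Sum.elim_inr, hestar]
          rw [dif_neg hsuv]
      right_inv := by
        intro p
        by_cases h : (p : Sym2 V) ∈ G.edgeSet
        · simp only [dif_pos h, Sum.elim_inl, hιdef]
        · simp only [dif_neg h, Sum.elim_inr]
          exact (hcover p h).symm }
  have sum_split : ∀ F : G'.edgeSet → ℝ, ∑ p, F p = (∑ f, F (ι f)) + F estar := by
    intro F
    calc ∑ p, F p = ∑ s, F (E s) := (Fintype.sum_equiv E _ _ fun s => rfl).symm
      _ = (∑ f, F (ι f)) + F estar := by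
        rw [Fintype.sum_sum_type]
        exact congrArg₂ (· + ·) (Finset.sum_congr rfl fun a _ => rfl)
          (by rw [Finset.sum_eq_single_of_mem () (Finset.mem_univ _) (by simp)]; simp only [E, Equiv.coe_fn_mk, Sum.elim_inr])
  -- adjacency matrix compatibilities
  have hAA : ∀ f g : G.edgeSet, A' (ι f) (ι g) = A f g := by
    intro f g
    have hiff : (G'.lineGraph).Adj (ι f) (ι g) ↔ (G.lineGraph).Adj f g := by
      simp [SimpleGraph.lineGraph, hιdef, Ne, Subtype.ext_iff]
    by_cases h : (G.lineGraph).Adj f g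
    · rw [hA'def, hAdef, adjMat_of_adj _ (hiff.mpr h), adjMat_of_adj _ h]
    · rw [hA'def, hAdef, adjMat_of_not_adj _ (fun hh => h (hiff.mp hh)),
        adjMat_of_not_adj _ h]
  have hAe1 : ∀ f : G.edgeSet, u ∈ (f : Sym2 V) → A' (ι f) estar = 1 := by
    intro f hu
    refine adjMat_of_adj _ ?_
    refine ⟨hιne f, ⟨u, ?_, ?_⟩⟩
    · exact hu
    · exact Sym2.mem_mk_left u v
  -- quadratic form decomposition for extended vectors
  have key : ∀ (x : G.edgeSet → ℝ) (ε : ℝ),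
      ∃ y : G'.edgeSet → ℝ, (∀ f, y (ι f) = x f) ∧ y estar = ε ∧
        y ⬝ᵥ y = x ⬝ᵥ x + ε ^ 2 ∧
        y ⬝ᵥ A' *ᵥ y = x ⬝ᵥ A *ᵥ x + 2 * ε * (∑ f, A' (ι f) estar * x f) := by
    intro x ε
    set y : G'.edgeSet → ℝ :=
      fun p => if h : (p : Sym2 V) ∈ G.edgeSet then x ⟨p, h⟩ else ε with hydef
    have hyι : ∀ f, y (ι f) = x f := by
      intro f
      simp only [hydef]
      rw [dif_pos f.2]
    have hye : y estar = ε := by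
      simp only [hydef, hestar]
      rw [dif_neg hsuv]
    refine ⟨y, hyι, hye, ?_, ?_⟩
    · have : y ⬝ᵥ y = ∑ p, y p * y p := rfl
      rw [this, sum_split (fun p => y p * y p)]
      simp only [hyι, hye]
      have : x ⬝ᵥ x = ∑ f, x f * x f := rfl
      rw [this]; ring
    · rw [quad_sum, quad_sum]
      rw [sum_split (fun p => ∑ q, A' p q * y p * y q)]
      have hinner : ∀ p, (∑ q, A' p q * y p * y q)
          = (∑ g, A' p (ι g) * y p * x g) + A' p estar * y p * ε := by
        intro p
        rw [sum_split (fun q => A' p q * y p * y q)]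
        simp only [hyι, hye]
      simp only [hinner]
      rw [Finset.sum_add_distrib]
      simp only [hyι, hye]
      have hsymm : ∀ g, A' estar (ι g) = A' (ι g) estar := by
        intro g; rw [hA'def]; exact adjMat_symm _ _ _
      simp only [hsymm]
      have hdiag : A' estar estar = 0 := by rw [hA'def]; exact adjMat_diag _ _
      rw [hdiag]
      have h1 : ∑ f, A' (ι f) estar * x f * ε = ε * (∑ f, A' (ι f) estar * x f) := by
        rw [Finset.mul_sum]; exact Finset.sum_congr rfl fun f _ => by ring
      have h2 : ∑ g, A' (ι g) estar * ε * x g = ε * (∑ f, A' (ι f) estar * x f) := by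
        rw [Finset.mul_sum]; exact Finset.sum_congr rfl fun f _ => by ring
      rw [h1, h2]
      simp only [hAA]
      ring
  -- two adjacent distinct edges of G (from a u-v path of length ≥ 2)
  obtain ⟨w0⟩ := hconn.preconnected u v
  obtain ⟨b, c, hub, hbc, hubc⟩ : ∃ b c, G.Adj u b ∧ G.Adj b c ∧ u ≠ c := by
    have hp := w0.toPath.2
    set p := w0.toPath.1 with hpdef
    clear_value p
    cases p with
    | nil => exact absurd rfl huv
    | cons h q =>
      cases q with
      | nil => exact absurd h hne
      | @cons _ c _ h' q' =>
        refine ⟨_, _, h, h', ?_⟩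
        have hnd := hp.support_nodup
        rw [SimpleGraph.Walk.support_cons] at hnd
        have hu_not := (List.nodup_cons.mp hnd).1
        intro huc
        apply hu_not
        rw [SimpleGraph.Walk.support_cons]
        exact List.mem_cons_of_mem _ (huc ▸ SimpleGraph.Walk.start_mem_support q')
  set e1 : G.edgeSet := ⟨s(u, b), (SimpleGraph.mem_edgeSet _).mpr hub⟩ with he1
  set e2 : G.edgeSet := ⟨s(b, c), (SimpleGraph.mem_edgeSet _).mpr hbc⟩ with he2
  have he12 : e1 ≠ e2 := by
    intro h
    have hh : s(u, b) = s(b, c) := congrArg Subtype.val h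
    rw [Sym2.eq_iff] at hh
    rcases hh with ⟨h1, _⟩ | ⟨h1, _⟩
    · exact G.irrefl (v := u) (h1 ▸ hub)
    · exact hubc h1
  have hadj12 : (G.lineGraph).Adj e1 e2 := by
    rw [SimpleGraph.lineGraph_adj_iff_exists]
    exact ⟨he12, b, Sym2.mem_mk_right u b, Sym2.mem_mk_left b c⟩
  haveI : Nonempty G.edgeSet := ⟨e1⟩
  set lam : ℝ := maxEig hL with hlamdef
  -- lam ≥ 1
  have hlam1 : (1 : ℝ) ≤ lam := by
    set t : G.edgeSet → ℝ := Pi.single e1 1 + Pi.single e2 1 with ht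
    have htt : t ⬝ᵥ t = 2 := by
      simp [ht, add_dotProduct, dotProduct_add, single_dotProduct,
        dotProduct_single, Pi.single_apply, he12, he12.symm]
      norm_num
    have htAt : t ⬝ᵥ A *ᵥ t = 2 := by
      have hA12 : A e1 e2 = 1 := adjMat_of_adj _ hadj12
      have hA21 : A e2 e1 = 1 := adjMat_of_adj _ hadj12.symm
      have hd1 : A e1 e1 = 0 := adjMat_diag _ _
      have hd2 : A e2 e2 = 0 := adjMat_diag _ _
      simp [ht, Matrix.mulVec_add, Matrix.mulVec_single, add_dotProduct,
        dotProduct_add, single_dotProduct, dotProduct_single]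
      rw [hA12, hA21, hd1, hd2]
      norm_num
    have := quad_le_max hL t
    rw [htAt, htt] at this
    linarith
  have hlam0 : (0 : ℝ) < lam := lt_of_lt_of_le one_pos hlam1
  -- a nonnegative unit vector achieving lam
  obtain ⟨wv, hwv1, hwvq⟩ := exists_unit_max hL
  set x : G.edgeSet → ℝ := fun i => |wv i| with hxdef
  have hx0 : ∀ i, 0 ≤ x i := fun i => abs_nonneg _
  have hxx : x ⬝ᵥ x = 1 := by
    rw [← hwv1]
    exact Finset.sum_congr rfl fun i _ => abs_mul_abs_self (wv i)
  have hxq : x ⬝ᵥ A *ᵥ x = lam := by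
    refine le_antisymm ?_ ?_
    · have := quad_le_max hL x
      rwa [hxx, mul_one] at this
    · rw [hlamdef, ← hwvq, quad_sum, quad_sum]
      refine Finset.sum_le_sum fun p _ => Finset.sum_le_sum fun q _ => ?_
      have h1 : A p q * wv p * wv q ≤ A p q * |wv p * wv q| := by
        rw [mul_assoc]
        exact mul_le_mul_of_nonneg_left (le_abs_self _) (adjMat_nonneg _ _ _)
      calc A p q * wv p * wv q ≤ A p q * |wv p * wv q| := h1
        _ = A p q * x p * x q := by rw [abs_mul, hxdef, mul_assoc]
  have heig : A *ᵥ x = lam • x := eigvec_of_quad_eq_max hL x hxx hxq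
  -- some coordinate of x is positive
  have hex : ∃ e0 : G.edgeSet, 0 < x e0 := by
    by_contra hcon
    push_neg at hcon
    have hzero : ∀ i, x i = 0 := fun i => le_antisymm (hcon i) (hx0 i)
    have : x ⬝ᵥ x = 0 := by
      simp only [dotProduct]
      exact Finset.sum_eq_zero fun i _ => by rw [hzero i, mul_zero]
    rw [hxx] at this
    norm_num at this
  obtain ⟨e0, hxe0⟩ := hex
  -- positivity propagates along G
  have step : ∀ a b' : V, G.Adj a b' → (∃ f : G.edgeSet, a ∈ (f : Sym2 V) ∧ 0 < x f) →
      ∃ f : G.edgeSet, b' ∈ (f : Sym2 V) ∧ 0 < x f := by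
    rintro a b' hab ⟨f, haf, hxf⟩
    set g : G.edgeSet := ⟨s(a, b'), (SimpleGraph.mem_edgeSet _).mpr hab⟩ with hg
    have hbg : b' ∈ (g : Sym2 V) := Sym2.mem_mk_right a b'
    refine ⟨g, hbg, ?_⟩
    by_cases hgf : g = f
    · rw [hgf]; exact hxf
    · have hadjgf : (G.lineGraph).Adj g f := by
        rw [SimpleGraph.lineGraph_adj_iff_exists]
        exact ⟨hgf, a, Sym2.mem_mk_left a b', haf⟩
      have hAgf : A g f = 1 := adjMat_of_adj _ hadjgf
      have heq : ∑ h, A g h * x h = lam * x g := by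
        have h0 := congrFun heig g
        simpa [Matrix.mulVec, dotProduct, Pi.smul_apply, smul_eq_mul] using h0
      have hsum : x f ≤ ∑ h, A g h * x h := by
        have h0 := Finset.single_le_sum (f := fun h => A g h * x h)
          (fun h _ => mul_nonneg (adjMat_nonneg _ _ _) (hx0 h)) (Finset.mem_univ f)
        simp only [hAgf, one_mul] at h0
        exact h0
      nlinarith [hx0 g]
  have reach : ∀ (a b' : V), G.Walk a b' → (∃ f : G.edgeSet, a ∈ (f : Sym2 V) ∧ 0 < x f) →
      ∃ f : G.edgeSet, b' ∈ (f : Sym2 V) ∧ 0 < x f := by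
    intro a b' w
    induction w with
    | nil => exact id
    | cons h q ih => exact fun hpa => ih (step _ _ h hpa)
  obtain ⟨f0, hf0u, hf0pos⟩ := reach ((e0 : Sym2 V).out.1) u
    (hconn.preconnected _ u).some ⟨e0, Sym2.out_fst_mem _, hxe0⟩
  -- the coupling sum S
  set S : ℝ := ∑ f, A' (ι f) estar * x f with hSdef
  have hxf0S : x f0 ≤ S := by
    have h0 := Finset.single_le_sum (f := fun f => A' (ι f) estar * x f)
      (fun f _ => mul_nonneg (by rw [hA'def]; exact adjMat_nonneg _ _ _) (hx0 f))
      (Finset.mem_univ f0)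
    simp only [hAe1 f0 hf0u, one_mul] at h0
    exact h0
  have hSpos : 0 < S := lt_of_lt_of_le hf0pos hxf0S
  -- maximum eigenvalue strictly increases
  have hmaxlt : maxEig hL < maxEig hL' := by
    set ε : ℝ := S / lam with hεdef
    have hεpos : 0 < ε := div_pos hSpos hlam0
    have hεlam : lam * ε = S := by
      rw [hεdef]; field_simp
    obtain ⟨y, hyι, hye, hyy, hyq⟩ := key x ε
    have hub2 := quad_le_max hL' y
    rw [hyq, hyy, hxx, hxq, ← hSdef] at hub2
    by_contra hcon
    push_neg at hcon
    rw [← hlamdef] at hcon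
    have h2 : maxEig hL' * (1 + ε ^ 2) ≤ lam * (1 + ε ^ 2) := by nlinarith [sq_nonneg ε]
    nlinarith
  -- minimum eigenvalue does not increase
  have hminle : minEig hL' ≤ minEig hL := by
    obtain ⟨z, hz1, hzq⟩ := exists_unit_min hL
    obtain ⟨y, hyι, hye, hyy, hyq⟩ := key z 0
    have hlb := min_le_quad hL' y
    rw [hyq, hyy, hz1, hzq] at hlb
    have h0 : (1 : ℝ) + 0 ^ 2 = 1 := by norm_num
    rw [h0, mul_one] at hlb
    linarith
  show maxEig hL - minEig hL < maxEig hL' - minEig hL'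
  rw [← hlamdef] at hmaxlt ⊢
  linarith

end SpreadPaper
end
end
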